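/- Let Ω ⊆ ℝ^d be measurable of measure 1 and Λ ⊆ ℝ^d a countable set. Then the family {e^{2πi⟨λ,x⟩} : λ ∈ Λ} is an orthonormal basis of L²(Ω) if and only if ∑_{λ∈Λ} |χ̂_Ω(x−λ)|² = 1 for almost every x ∈ ℝ^d, where χ̂_Ω(ξ) = ∫_Ω e^{−2πi⟨ξ,x⟩} dx. -/

import Mathlib

open MeasureTheory Complex FourierTransform RealInnerProductSpace Filter Set Matrix SchwartzMap
open scoped Real ComplexConjugate InnerProductSpace

noncomputable section

namespace SpecAux

variable {d : ℕ}

local notation "V" => EuclideanSpace ℝ (Fin d)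

lemma smooth_compsupp_schwartz (ψ : V → ℝ) (hψ : ContDiff ℝ ((⊤ : ℕ∞) : WithTop ℕ∞) ψ) (hc : HasCompactSupport ψ) :
    ∃ Ψ : SchwartzMap V ℂ, ∀ x, Ψ x = (ψ x : ℂ) := by
  have hf : ContDiff ℝ ((⊤ : ℕ∞) : WithTop ℕ∞) (fun x : V => (ψ x : ℂ)) :=
    (Complex.ofRealCLM.contDiff (n := ((⊤ : ℕ∞) : WithTop ℕ∞))).comp hψ
  have hcs : HasCompactSupport (fun x : V => (ψ x : ℂ)) :=
    hc.comp_left (g := fun r : ℝ => (r : ℂ)) (by simp)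
  refine ⟨⟨fun x => (ψ x : ℂ), hf, ?_⟩, fun x => rfl⟩
  intro k n
  have hF : Continuous fun x : V => ‖x‖ ^ k * ‖iteratedFDeriv ℝ n (fun x : V => (ψ x : ℂ)) x‖ := by
    exact (continuous_norm.pow k).mul ((hf.continuous_iteratedFDeriv (by exact_mod_cast le_top)).norm)
  have hFs : HasCompactSupport fun x : V => ‖x‖ ^ k * ‖iteratedFDeriv ℝ n (fun x : V => (ψ x : ℂ)) x‖ := by
    have := (hcs.iteratedFDeriv (𝕜 := ℝ) n).norm
    exact this.mul_left
  obtain ⟨C, hC⟩ := hFs.exists_bound_of_continuous hF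
  exact ⟨C, fun x => (le_abs_self _).trans ((Real.norm_eq_abs _ ▸ hC x))⟩

lemma innerl_flip : (innerₗ (EuclideanSpace ℝ (Fin d))).flip = innerₗ (EuclideanSpace ℝ (Fin d)) := by
  apply LinearMap.ext; intro x; apply LinearMap.ext; intro y
  simpa using real_inner_comm y x

lemma euclid_fourier_inj {g : V → ℂ} (hg : Integrable g)
    (h : ∀ w : V, 𝓕 g w = 0) : g =ᵐ[volume] 0 := by
  apply ae_eq_zero_of_integral_contDiff_smul_eq_zero hg.locallyIntegrable
  intro ψ hψ hcψ
  obtain ⟨Ψ, hΨ⟩ := smooth_compsupp_schwartz ψ hψ hcψ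
  set φ := (FourierTransform.fourierCLE ℂ 𝓢(V, ℂ)).symm Ψ with hφdef
  have hφ : 𝓕 ⇑φ = ⇑Ψ := by
    have := (FourierTransform.fourierCLE ℂ 𝓢(V, ℂ)).apply_symm_apply Ψ
    rw [← this]; rfl
  have key := VectorFourier.integral_bilin_fourierIntegral_eq_flip
    (ContinuousLinearMap.mul ℂ ℂ) Real.continuous_fourierChar
    (L := innerₗ (EuclideanSpace ℝ (Fin d)))
    (by exact continuous_inner) φ.integrable hg
    (μ := volume) (ν := volume)
  rw [innerl_flip] at key
  have hrhs : ∫ x : V, (ContinuousLinearMap.mul ℂ ℂ) (φ x)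
      ((VectorFourier.fourierIntegral Real.fourierChar volume (innerₗ _) g) x) ∂volume = 0 := by
    have : ∀ x : V, (VectorFourier.fourierIntegral Real.fourierChar volume (innerₗ _) g) x = 0 :=
      fun x => h x
    simp [this]
  rw [hrhs] at key
  have : ∀ ξ : V, (ContinuousLinearMap.mul ℂ ℂ)
      ((VectorFourier.fourierIntegral Real.fourierChar volume (innerₗ _) (⇑φ)) ξ) (g ξ)
      = (ψ ξ : ℂ) * g ξ := by
    intro ξ
    have : (VectorFourier.fourierIntegral Real.fourierChar volume (innerₗ _) (⇑φ)) ξ = Ψ ξ := by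
      rw [← hφ]; rfl
    simp [this, hΨ]
  calc ∫ x : V, ψ x • g x = ∫ x : V, (ψ x : ℂ) * g x := by
        simp only [Complex.real_smul]
    _ = 0 := by rw [← key]; exact integral_congr_ae (Eventually.of_forall fun ξ => (this ξ).symm)

lemma pi_fourier_inj {g : (Fin d → ℝ) → ℂ} (hg : Integrable g)
    (h : ∀ x : Fin d → ℝ, ∫ y, Complex.exp ((-2 : ℂ) * (Real.pi : ℂ) * Complex.I *
      ((dotProduct x y : ℝ) : ℂ)) * g y = 0) :
    g =ᵐ[volume] 0 := by
  set e := (MeasurableEquiv.toLp 2 (Fin d → ℝ)).symm with he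
  have hmp := EuclideanSpace.volume_preserving_symm_measurableEquiv_toLp (Fin d)
  have hinner : ∀ v w : EuclideanSpace ℝ (Fin d), ⟪v, w⟫ = dotProduct (e v) (e w) := by
    intro v w
    simp [PiLp.inner_apply, dotProduct, RCLike.inner_apply, mul_comm]
    rfl
  have hg' : Integrable (g ∘ e) volume := (hmp.integrable_comp_emb e.measurableEmbedding).mpr hg
  have hF : ∀ w, 𝓕 (g ∘ e) w = 0 := by
    intro w
    rw [Real.fourier_eq]
    have step : ∫ v, Real.fourierChar (-⟪v, w⟫) • (g ∘ e) v
        = ∫ y, Real.fourierChar (-(dotProduct y (e w))) • g y := by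
      rw [← MeasurePreserving.integral_comp' (f := e) hmp
        (fun y => Real.fourierChar (-(dotProduct y (e w))) • g y)]
      refine integral_congr_ae (Eventually.of_forall fun v => ?_)
      show Real.fourierChar (-⟪v, w⟫) • (g ∘ e) v
          = Real.fourierChar (-(dotProduct (e v) (e w))) • g (e v)
      rw [hinner v w]
      rfl
    rw [step]
    have : ∀ y, Real.fourierChar (-(dotProduct y (e w))) • g y
        = Complex.exp ((-2 : ℂ) * (Real.pi : ℂ) * Complex.I *
          ((dotProduct (e w) y : ℝ) : ℂ)) * g y := by
      intro y
      rw [Circle.smul_def, Real.fourierChar_apply, dotProduct_comm]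
      congr 1
      push_cast
      ring
    rw [integral_congr_ae (Eventually.of_forall this)]
    exact h (e w)
  have h0 : (g ∘ e) =ᵐ[volume] 0 := euclid_fourier_inj hg' hF
  have : (volume : Measure (Fin d → ℝ)) = Measure.map e volume := hmp.map_eq.symm
  rw [EventuallyEq, this, ← MeasurableEquiv.map_ae, eventually_map]
  exact h0

variable (Ω : Set (Fin d → ℝ))

/-- the exponential e_t -/
def ef (t : Fin d → ℝ) : (Fin d → ℝ) → ℂ :=
  fun x => Complex.exp (2 * (Real.pi : ℂ) * Complex.I * ((dotProduct t x : ℝ) : ℂ))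

lemma ef_continuous (t : Fin d → ℝ) : Continuous (ef t) := by
  apply Complex.continuous_exp.comp
  apply continuous_const.mul
  apply Complex.continuous_ofReal.comp
  unfold dotProduct
  exact continuous_finset_sum _ fun i _ => continuous_const.mul (continuous_apply i)

lemma ef_norm (t x : Fin d → ℝ) : ‖ef t x‖ = 1 := by
  rw [ef, Complex.norm_exp]
  have : (2 * (Real.pi : ℂ) * Complex.I * ((dotProduct t x : ℝ) : ℂ)).re = 0 := by
    simp [Complex.mul_re, Complex.mul_im]
  rw [this, Real.exp_zero]

lemma ef_conj (t x : Fin d → ℝ) : conj (ef t x) = ef (-t) x := by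
  rw [ef, ef, ← Complex.exp_conj]
  congr 1
  simp only [_root_.map_mul, Complex.conj_I, Complex.conj_ofReal, map_ofNat]
  push_cast [neg_dotProduct]
  ring

lemma ef_mul (s t x : Fin d → ℝ) : ef s x * ef t x = ef (s + t) x := by
  rw [ef, ef, ef, ← Complex.exp_add]
  congr 1
  push_cast [add_dotProduct]
  ring

local notation "μ" => Measure.restrict volume Ω

lemma prob (hvol : volume Ω = 1) : IsProbabilityMeasure (μ : Measure (Fin d → ℝ)) := by
  constructor
  rw [Measure.restrict_apply_univ]
  exact hvol

lemma ef_memLp (hvol : volume Ω = 1) (t : Fin d → ℝ) : MemLp (ef t) 2 μ := by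
  have : IsProbabilityMeasure (μ : Measure (Fin d → ℝ)) := prob Ω hvol
  refine MemLp.of_bound ((ef_continuous t).aestronglyMeasurable) 1 ?_
  exact Eventually.of_forall fun x => le_of_eq (ef_norm t x)

/-- e_t as an element of L² -/
def eL (hvol : volume Ω = 1) (t : Fin d → ℝ) : Lp ℂ 2 (μ : Measure (Fin d → ℝ)) :=
  (ef_memLp Ω hvol t).toLp (ef t)

/-- `G ξ = ∫_Ω e^{2πi ξ·y} dy`; the conjugate of the Fourier transform of the indicator. -/
def G (ξ : Fin d → ℝ) : ℂ := ∫ y in Ω, ef ξ y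

lemma inner_eL (hvol : volume Ω = 1) (s t : Fin d → ℝ) :
    (inner ℂ (eL Ω hvol s) (eL Ω hvol t) : ℂ) = G Ω (t - s) := by
  have : IsProbabilityMeasure (μ : Measure (Fin d → ℝ)) := prob Ω hvol
  rw [MeasureTheory.L2.inner_def]
  have h1 : ∀ᵐ y ∂(μ : Measure (Fin d → ℝ)),
      (inner ℂ ((eL Ω hvol s : Lp ℂ 2 μ) y) ((eL Ω hvol t : Lp ℂ 2 μ) y) : ℂ)
        = ef (t - s) y := by
    have hcs : (eL Ω hvol s : (Fin d → ℝ) → ℂ) =ᵐ[μ] ef s := (ef_memLp Ω hvol s).coeFn_toLp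
    have hct : (eL Ω hvol t : (Fin d → ℝ) → ℂ) =ᵐ[μ] ef t := (ef_memLp Ω hvol t).coeFn_toLp
    filter_upwards [hcs, hct] with y hs ht
    rw [hs, ht, RCLike.inner_apply, ef_conj, ef_mul]
    congr 1
  rw [integral_congr_ae h1]
  rfl

lemma G_zero (hvol : volume Ω = 1) : G Ω 0 = 1 := by
  have : ∀ y, ef (0 : Fin d → ℝ) y = 1 := by
    intro y; rw [ef]; simp [zero_dotProduct]
  rw [G]
  rw [integral_congr_ae (Eventually.of_forall this)]
  simp [hvol, measureReal_def]

lemma G_continuous (hvol : volume Ω = 1) : Continuous (G Ω) := by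
  have : IsProbabilityMeasure (μ : Measure (Fin d → ℝ)) := prob Ω hvol
  apply continuous_of_dominated (bound := fun _ => (1 : ℝ))
  · exact fun ξ => ((ef_continuous ξ).aestronglyMeasurable)
  · exact fun ξ => Eventually.of_forall fun y => le_of_eq (ef_norm ξ y)
  · exact integrable_const 1
  · refine Eventually.of_forall fun y => ?_
    apply Complex.continuous_exp.comp
    apply continuous_const.mul
    apply Complex.continuous_ofReal.comp
    unfold dotProduct
    exact continuous_finset_sum _ fun i _ =>
      (continuous_apply i).mul continuous_const

lemma norm_eL (hvol : volume Ω = 1) (t : Fin d → ℝ) : ‖eL Ω hvol t‖ = 1 := by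
  have h : (inner ℂ (eL Ω hvol t) (eL Ω hvol t) : ℂ) = 1 := by
    rw [inner_eL, sub_self, G_zero Ω hvol]
  have h2 := inner_self_eq_norm_sq_to_K (𝕜 := ℂ) (eL Ω hvol t)
  rw [h] at h2
  have h3 : ‖eL Ω hvol t‖ ^ 2 = 1 := by
    have h4 : ((‖eL Ω hvol t‖ ^ 2 : ℝ) : ℂ) = 1 := by push_cast; exact h2.symm
    exact_mod_cast h4
  nlinarith [norm_nonneg (eL Ω hvol t)]



lemma Fh_eq (ξ : Fin d → ℝ) :
    (∫ y in Ω, Complex.exp ((-2 : ℂ) * (Real.pi : ℂ) * Complex.I *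
      ((dotProduct ξ y : ℝ) : ℂ))) = G Ω (-ξ) := by
  rw [G]
  refine integral_congr_ae (Eventually.of_forall fun y => ?_)
  have h : (-2 : ℂ) * (Real.pi : ℂ) * Complex.I * ((dotProduct ξ y : ℝ) : ℂ)
      = 2 * (Real.pi : ℂ) * Complex.I * ((dotProduct (-ξ) y : ℝ) : ℂ) := by
    push_cast [neg_dotProduct]
    ring
  show Complex.exp ((-2 : ℂ) * (Real.pi : ℂ) * Complex.I *
      ((dotProduct ξ y : ℝ) : ℂ)) = ef (-ξ) y
  rw [ef, h]

lemma G_conj (ξ : Fin d → ℝ) : conj (G Ω ξ) = G Ω (-ξ) := by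
  rw [G, G, ← integral_conj]
  refine integral_congr_ae (Eventually.of_forall fun y => ?_)
  exact ef_conj ξ y

lemma norm_Fh (ξ : Fin d → ℝ) :
    ‖∫ y in Ω, Complex.exp ((-2 : ℂ) * (Real.pi : ℂ) * Complex.I *
      ((dotProduct ξ y : ℝ) : ℂ))‖ = ‖G Ω ξ‖ := by
  rw [Fh_eq, ← G_conj, RCLike.norm_conj]

lemma inner_eL_f (hmeas : MeasurableSet Ω) (hvol : volume Ω = 1)
    (f : Lp ℂ 2 (Measure.restrict volume Ω)) (t : Fin d → ℝ) :
    (inner ℂ (eL Ω hvol t) f : ℂ)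
      = ∫ y, Complex.exp ((-2 : ℂ) * (Real.pi : ℂ) * Complex.I *
          ((dotProduct t y : ℝ) : ℂ)) * Set.indicator Ω (f : (Fin d → ℝ) → ℂ) y := by
  have h2 : ∀ y : Fin d → ℝ, Complex.exp ((-2 : ℂ) * (Real.pi : ℂ) * Complex.I *
      ((dotProduct t y : ℝ) : ℂ)) * Set.indicator Ω (f : (Fin d → ℝ) → ℂ) y
      = Set.indicator Ω (fun y => ef (-t) y * (f : (Fin d → ℝ) → ℂ) y) y := by
    intro y
    by_cases hy : y ∈ Ω
    · simp only [Set.indicator_of_mem hy]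
      congr 1
      rw [ef]
      congr 1
      push_cast [neg_dotProduct]
      ring
    · simp [Set.indicator_of_notMem hy]
  rw [integral_congr_ae (Eventually.of_forall h2), integral_indicator hmeas,
    MeasureTheory.L2.inner_def]
  refine integral_congr_ae ?_
  have hcs : (eL Ω hvol t : (Fin d → ℝ) → ℂ) =ᵐ[Measure.restrict volume Ω] ef t :=
    (ef_memLp Ω hvol t).coeFn_toLp
  filter_upwards [hcs] with y hy
  rw [hy, RCLike.inner_apply, ef_conj, mul_comm]

lemma eL_complete (hmeas : MeasurableSet Ω) (hvol : volume Ω = 1)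
    (f : Lp ℂ 2 (Measure.restrict volume Ω))
    (hf : ∀ t : Fin d → ℝ, (inner ℂ (eL Ω hvol t) f : ℂ) = 0) : f = 0 := by
  have hprob : IsProbabilityMeasure (Measure.restrict volume Ω) := prob Ω hvol
  have hfi : Integrable (f : (Fin d → ℝ) → ℂ) (Measure.restrict volume Ω) :=
    (Lp.memLp f).integrable (by norm_num)
  have hgi : Integrable (Set.indicator Ω (f : (Fin d → ℝ) → ℂ)) volume := by
    rw [integrable_indicator_iff hmeas]
    exact hfi
  have h0 := pi_fourier_inj hgi (fun x => by rw [← inner_eL_f Ω hmeas hvol f x]; exact hf x)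
  have h1 : (f : (Fin d → ℝ) → ℂ) =ᵐ[Measure.restrict volume Ω] 0 :=
    ((indicator_ae_eq_restrict hmeas).symm.trans (ae_restrict_of_ae h0) :)
  exact Lp.ext (h1.trans (Lp.coeFn_zero ℂ 2 _).symm)


lemma conj_mul_self (z : ℂ) : (starRingEnd ℂ) z * z = ((‖z‖ ^ 2 : ℝ) : ℂ) := by
  rw [Complex.conj_mul']; norm_cast

lemma inner_eL_left (hvol : volume Ω = 1) (f : Lp ℂ 2 (Measure.restrict volume Ω))
    (t : Fin d → ℝ) :
    (inner ℂ (eL Ω hvol t) f : ℂ) = ∫ y in Ω, ef (-t) y * (f : (Fin d → ℝ) → ℂ) y := by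
  rw [MeasureTheory.L2.inner_def]
  refine integral_congr_ae ?_
  filter_upwards [(ef_memLp Ω hvol t).coeFn_toLp] with y hy
  rw [show ((eL Ω hvol t : Lp ℂ 2 (Measure.restrict volume Ω)) : (Fin d → ℝ) → ℂ) y = ef t y from hy,
    RCLike.inner_apply, ef_conj, mul_comm]

lemma inner_eL_continuous (hvol : volume Ω = 1) (f : Lp ℂ 2 (Measure.restrict volume Ω)) :
    Continuous fun t : Fin d → ℝ => (inner ℂ (eL Ω hvol t) f : ℂ) := by
  have hprob : IsProbabilityMeasure (Measure.restrict volume Ω) := prob Ω hvol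
  rw [show (fun t : Fin d → ℝ => (inner ℂ (eL Ω hvol t) f : ℂ))
      = fun t => ∫ y in Ω, ef (-t) y * (f : (Fin d → ℝ) → ℂ) y from
    funext (inner_eL_left Ω hvol f)]
  apply continuous_of_dominated (bound := fun y => ‖(f : (Fin d → ℝ) → ℂ) y‖)
  · exact fun t => ((ef_continuous (-t)).aestronglyMeasurable.mul (Lp.aestronglyMeasurable f))
  · intro t
    refine Eventually.of_forall fun y => ?_
    rw [norm_mul, ef_norm, one_mul]
  · exact ((Lp.memLp f).integrable (by norm_num)).norm
  · refine Eventually.of_forall fun y => ?_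
    apply Continuous.mul _ continuous_const
    apply Complex.continuous_exp.comp
    apply continuous_const.mul
    apply Complex.continuous_ofReal.comp
    unfold dotProduct
    exact continuous_finset_sum _ fun i _ => ((continuous_apply i).neg.mul continuous_const)

lemma orth (hvol : volume Ω = 1) (Λ : Set (Fin d → ℝ))
    (hae1 : ∀ᵐ x : Fin d → ℝ ∂volume, ∑' p : Λ, ‖G Ω (x - (p : Fin d → ℝ))‖ ^ 2 = 1) :
    Orthonormal ℂ (fun p : Λ => eL Ω hvol (p : Fin d → ℝ)) := by
  classical
  rw [orthonormal_iff_ite]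
  intro p q
  by_cases hpq : p = q
  · subst hpq
    simp only [if_pos rfl, if_true]
    rw [inner_eL, sub_self, G_zero Ω hvol]
  · rw [if_neg hpq, inner_eL]
    -- show `G Ω (q - p) = 0`
    have hb : ∀ x : Fin d → ℝ, ‖G Ω (x - (p : Fin d → ℝ))‖ ^ 2
        + ‖G Ω (x - (q : Fin d → ℝ))‖ ^ 2 ≤ 1 := by
      have hael : ∀ᵐ x : Fin d → ℝ ∂volume, ‖G Ω (x - (p : Fin d → ℝ))‖ ^ 2
          + ‖G Ω (x - (q : Fin d → ℝ))‖ ^ 2 ≤ 1 := by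
        filter_upwards [hae1] with x hx
        have hsumm : Summable fun r : Λ => ‖G Ω (x - (r : Fin d → ℝ))‖ ^ 2 := by
          by_contra hns
          rw [tsum_eq_zero_of_not_summable hns] at hx
          norm_num at hx
        have := Summable.sum_le_tsum ({p, q} : Finset Λ) (fun i _ => by positivity) hsumm
        rw [Finset.sum_pair hpq, hx] at this
        exact this
      have hcont : Continuous fun x : Fin d → ℝ => ‖G Ω (x - (p : Fin d → ℝ))‖ ^ 2
          + ‖G Ω (x - (q : Fin d → ℝ))‖ ^ 2 := by
        have h1 : Continuous fun x : Fin d → ℝ => G Ω (x - (p : Fin d → ℝ)) :=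
          (G_continuous Ω hvol).comp (continuous_id.sub continuous_const)
        have h2 : Continuous fun x : Fin d → ℝ => G Ω (x - (q : Fin d → ℝ)) :=
          (G_continuous Ω hvol).comp (continuous_id.sub continuous_const)
        exact (h1.norm.pow 2).add (h2.norm.pow 2)
      intro x
      by_contra hgt
      push_neg at hgt
      set U : Set (Fin d → ℝ) := {x | 1 < ‖G Ω (x - (p : Fin d → ℝ))‖ ^ 2
          + ‖G Ω (x - (q : Fin d → ℝ))‖ ^ 2} with hU
      have hUopen : IsOpen U := isOpen_lt continuous_const hcont
      have hUnull : volume U = 0 := by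
        have := hael
        rw [ae_iff] at this
        refine measure_mono_null ?_ this
        intro z hz
        simpa [hU] using hz
      have hne : U.Nonempty := ⟨x, hgt⟩
      exact (hUopen.measure_pos volume hne).ne' hUnull
    have hq := hb (q : Fin d → ℝ)
    rw [sub_self, G_zero Ω hvol] at hq
    have h1 : ‖(1 : ℂ)‖ ^ 2 = 1 := by norm_num
    rw [h1] at hq
    have : ‖G Ω ((q : Fin d → ℝ) - (p : Fin d → ℝ))‖ ^ 2 ≤ 0 := by linarith
    have h2 : ‖G Ω ((q : Fin d → ℝ) - (p : Fin d → ℝ))‖ ^ 2 = 0 :=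
      le_antisymm this (by positivity)
    have h3 : ‖G Ω ((q : Fin d → ℝ) - (p : Fin d → ℝ))‖ = 0 :=
      by
      simpa using (pow_eq_zero_iff (two_ne_zero)).mp h2
    exact norm_eq_zero.mp h3

end SpecAux

open MeasureTheory Matrix

theorem spectrum_iff_power_spectrum_tiles
    {d : ℕ} (Ω : Set (Fin d → ℝ)) (hmeas : MeasurableSet Ω) (hvol : volume Ω = 1)
    (Λ : Set (Fin d → ℝ)) (hΛ : Λ.Countable) :
    (∃ b : HilbertBasis Λ ℂ (Lp ℂ 2 (volume.restrict Ω)),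
        ∀ p : Λ, (b p : (Fin d → ℝ) → ℂ) =ᵐ[volume.restrict Ω]
          fun x => Complex.exp (2 * (Real.pi : ℂ) * Complex.I *
            ((dotProduct (p : Fin d → ℝ) x : ℝ) : ℂ))) ↔
      (∀ᵐ x : Fin d → ℝ ∂volume,
        ∑' p : Λ,
          ‖∫ y in Ω, Complex.exp ((-2 : ℂ) * (Real.pi : ℂ) * Complex.I *
            ((dotProduct (x - (p : Fin d → ℝ)) y : ℝ) : ℂ))‖ ^ 2 = 1) := by
  constructor
  · rintro ⟨b, hb⟩
    refine Filter.Eventually.of_forall fun x => ?_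
    have hbp : ∀ p : Λ, (b p : Lp ℂ 2 (volume.restrict Ω)) = SpecAux.eL Ω hvol ↑p := by
      intro p
      exact Lp.ext ((hb p).trans ((SpecAux.ef_memLp Ω hvol ↑p).coeFn_toLp).symm)
    have hs : HasSum (fun p : Λ =>
        (inner ℂ (SpecAux.eL Ω hvol x) (b p) : ℂ) * inner ℂ (b p) (SpecAux.eL Ω hvol x))
        (inner ℂ (SpecAux.eL Ω hvol x) (SpecAux.eL Ω hvol x) : ℂ) :=
      b.hasSum_inner_mul_inner _ _
    have hterm : ∀ p : Λ,
        (inner ℂ (SpecAux.eL Ω hvol x) (b p) : ℂ) * inner ℂ (b p) (SpecAux.eL Ω hvol x)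
        = ((‖∫ y in Ω, Complex.exp ((-2 : ℂ) * (Real.pi : ℂ) * Complex.I *
            ((dotProduct (x - (p : Fin d → ℝ)) y : ℝ) : ℂ))‖ ^ 2 : ℝ) : ℂ) := by
      intro p
      rw [hbp p, SpecAux.inner_eL Ω hvol x ↑p, SpecAux.inner_eL Ω hvol ↑p x,
        show ((p : Fin d → ℝ) - x) = -(x - (p : Fin d → ℝ)) from (neg_sub _ _).symm,
        ← SpecAux.G_conj, SpecAux.conj_mul_self, SpecAux.norm_Fh Ω (x - (p : Fin d → ℝ))]
    have hinner1 : (inner ℂ (SpecAux.eL Ω hvol x) (SpecAux.eL Ω hvol x) : ℂ) = ((1 : ℝ) : ℂ) := by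
      rw [SpecAux.inner_eL, sub_self, SpecAux.G_zero Ω hvol]
      norm_num
    rw [funext hterm, hinner1] at hs
    exact (Complex.hasSum_ofReal.mp hs).tsum_eq
  · intro hae
    have hae1 : ∀ᵐ x : Fin d → ℝ ∂volume,
        ∑' p : Λ, ‖SpecAux.G Ω (x - (p : Fin d → ℝ))‖ ^ 2 = 1 := by
      filter_upwards [hae] with x hx
      rw [← hx]
      exact tsum_congr fun p => by rw [SpecAux.norm_Fh Ω (x - (p : Fin d → ℝ))]
    have honv := SpecAux.orth Ω hvol Λ hae1
    have hcomp : ∀ f : Lp ℂ 2 (volume.restrict Ω),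
        (∀ p : Λ, (inner ℂ (SpecAux.eL Ω hvol ↑p) f : ℂ) = 0) → f = 0 := by
      intro f hforth
      by_cases hf0 : f = 0
      · exact hf0
      exfalso
      have hfn : ‖f‖ ≠ 0 := norm_ne_zero_iff.mpr hf0
      set c : ℂ := ((‖f‖ : ℝ) : ℂ)⁻¹ with hc
      set u : Lp ℂ 2 (volume.restrict Ω) := c • f with hu
      have hun : ‖u‖ = 1 := by
        rw [hu, norm_smul, hc, norm_inv, Complex.norm_real, Real.norm_eq_abs,
          _root_.abs_of_nonneg (norm_nonneg f)]
        field_simp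
      have huo : ∀ p : Λ, (inner ℂ (SpecAux.eL Ω hvol ↑p) u : ℂ) = 0 := by
        intro p
        rw [hu, inner_smul_right, hforth p, mul_zero]
      classical
      set w : (↥Λ) ⊕ Unit → Lp ℂ 2 (volume.restrict Ω) :=
        Sum.elim (fun p : Λ => SpecAux.eL Ω hvol ↑p) (fun _ => u) with hw
      have hwo : Orthonormal ℂ w := by
        rw [orthonormal_iff_ite]
        rintro (p | ⟨⟩) (q | ⟨⟩)
        · have := orthonormal_iff_ite.mp honv p q
          simp only [hw, Sum.elim_inl]
          rw [this]
          by_cases h : p = q <;> simp [h]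
        · simp only [hw, Sum.elim_inl, Sum.elim_inr]
          rw [huo p]
          simp
        · simp only [hw, Sum.elim_inl, Sum.elim_inr]
          rw [← inner_conj_symm, huo q, map_zero]
          simp
        · simp only [hw, Sum.elim_inr]
          rw [inner_self_eq_norm_sq_to_K, hun]
          simp
      have hball : ∀ x : Fin d → ℝ, ∀ s : Finset (↥Λ),
          (∑ p ∈ s, ‖(inner ℂ (SpecAux.eL Ω hvol ↑p) (SpecAux.eL Ω hvol x) : ℂ)‖ ^ 2)
            + ‖(inner ℂ u (SpecAux.eL Ω hvol x) : ℂ)‖ ^ 2 ≤ 1 := by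
        intro x s
        have hnm : (Sum.inr () : ↥Λ ⊕ Unit) ∉ s.map ⟨Sum.inl, Sum.inl_injective⟩ := by simp
        have hbes := hwo.sum_inner_products_le
          (s := insert (Sum.inr ()) (s.map ⟨Sum.inl, Sum.inl_injective⟩)) (SpecAux.eL Ω hvol x)
        rw [Finset.sum_insert hnm, Finset.sum_map, SpecAux.norm_eL Ω hvol x, one_pow] at hbes
        simp only [hw, Sum.elim_inr, Sum.elim_inl, Function.Embedding.coeFn_mk] at hbes
        linarith
      have hkey : ∀ x : Fin d → ℝ,
          (∑' p : Λ, ‖(inner ℂ (SpecAux.eL Ω hvol ↑p) (SpecAux.eL Ω hvol x) : ℂ)‖ ^ 2)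
            ≤ 1 - ‖(inner ℂ u (SpecAux.eL Ω hvol x) : ℂ)‖ ^ 2 := by
        intro x
        have h0 : 0 ≤ 1 - ‖(inner ℂ u (SpecAux.eL Ω hvol x) : ℂ)‖ ^ 2 := by
          have := hball x ∅
          simp only [Finset.sum_empty] at this
          linarith
        refine tsum_le_of_sum_le' h0 fun s => ?_
        have := hball x s
        linarith
      have hae2 : ∀ᵐ x : Fin d → ℝ ∂volume, (inner ℂ (SpecAux.eL Ω hvol x) u : ℂ) = 0 := by
        filter_upwards [hae1] with x hx
        have hterm2 : ∀ p : Λ, ‖(inner ℂ (SpecAux.eL Ω hvol ↑p) (SpecAux.eL Ω hvol x) : ℂ)‖ ^ 2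
            = ‖SpecAux.G Ω (x - (p : Fin d → ℝ))‖ ^ 2 := fun p => by
          rw [SpecAux.inner_eL Ω hvol]
        have hk := hkey x
        rw [tsum_congr hterm2, hx] at hk
        have hle : ‖(inner ℂ u (SpecAux.eL Ω hvol x) : ℂ)‖ ^ 2 ≤ 0 := by linarith
        have h2 : ‖(inner ℂ u (SpecAux.eL Ω hvol x) : ℂ)‖ ^ 2 = 0 :=
          le_antisymm hle (by positivity)
        have h3 : (inner ℂ u (SpecAux.eL Ω hvol x) : ℂ) = 0 :=
          norm_eq_zero.mp (by simpa using (pow_eq_zero_iff two_ne_zero).mp h2)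
        rw [← inner_conj_symm, h3, map_zero]
      have hcont := SpecAux.inner_eL_continuous Ω hvol u
      have hall : ∀ x : Fin d → ℝ, (inner ℂ (SpecAux.eL Ω hvol x) u : ℂ) = 0 := by
        intro x
        by_contra hne
        have hnull : volume {x : Fin d → ℝ | ¬ ((inner ℂ (SpecAux.eL Ω hvol x) u : ℂ) = 0)} = 0 := by
          rw [← MeasureTheory.ae_iff]
          exact hae2
        have hUopen : IsOpen ((fun x : Fin d → ℝ => (inner ℂ (SpecAux.eL Ω hvol x) u : ℂ)) ⁻¹'
            {z : ℂ | z ≠ 0}) := hcont.isOpen_preimage _ isOpen_ne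
        exact (hUopen.measure_pos volume ⟨x, hne⟩).ne' hnull
      have hu0 : u = 0 := SpecAux.eL_complete Ω hmeas hvol u hall
      rw [hu] at hu0
      rcases smul_eq_zero.mp hu0 with hc0 | hf00
      · rw [hc, inv_eq_zero, Complex.ofReal_eq_zero] at hc0
        exact hfn hc0
      · exact hf0 hf00
    have hbot : (Submodule.span ℂ (Set.range (fun p : Λ => SpecAux.eL Ω hvol (p : Fin d → ℝ))))ᗮ = ⊥ := by
      rw [Submodule.eq_bot_iff]
      intro f hfm
      exact hcomp f fun p =>
        (Submodule.mem_orthogonal _ f).mp hfm _ (Submodule.subset_span ⟨p, rfl⟩)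
    refine ⟨HilbertBasis.mkOfOrthogonalEqBot honv hbot, fun p => ?_⟩
    have hco : (HilbertBasis.mkOfOrthogonalEqBot honv hbot) p = SpecAux.eL Ω hvol ↑p :=
      congrFun (HilbertBasis.coe_mkOfOrthogonalEqBot honv hbot) p
    rw [hco]
    exact (SpecAux.ef_memLp Ω hvol ↑p).coeFn_toLp
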